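/- arXiv:1110.0357 — 2 statements merged into one kernel-verified Lean document; each statement's English description precedes it below -/
import Mathlib

section
/- Let E be the elliptic curve over ℂ defined by y² = 4x(x²+1), and let x₀ = √2 - 1 - i·√(2(√2 - 1)). If P is a point on E with x-coordinate x₀, then 4P = (0,0). -/
open WeierstrassCurve Complex Real

/-- The elliptic curve `y² = 4x(x² + 1)` over `ℂ`, written in the standard Weierstrass form
`y′² = x³ + x` via the change of variables `y = 2y′`; a point `(x, y)` on the original curve
corresponds to the point `(x, y / 2)` on this Weierstrass model. -/
noncomputable def E : WeierstrassCurve.Affine ℂ :=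
  { a₁ := 0, a₂ := 0, a₃ := 0, a₄ := 1, a₆ := 0 }

lemma some_congr {F : Type*} [Field F] {W : WeierstrassCurve.Affine F} {x₁ y₁ x₂ y₂ : F}
    (hx : x₁ = x₂) (hy : y₁ = y₂) (h₁ : W.Nonsingular x₁ y₁) (h₂ : W.Nonsingular x₂ y₂) :
    WeierstrassCurve.Affine.Point.some _ _ h₁ = WeierstrassCurve.Affine.Point.some _ _ h₂ := by
  subst hx; subst hy; rfl

lemma key (x₀ y : ℂ) (h : E.Nonsingular x₀ y)
    (hq : x₀ ^ 4 + 4 * x₀ ^ 3 - 2 * x₀ ^ 2 + 4 * x₀ + 1 = 0) :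
    ∃ h₀ : E.Nonsingular 0 0,
      4 • WeierstrassCurve.Affine.Point.some _ _ h = WeierstrassCurve.Affine.Point.some _ _ h₀ := by
  have h₀ : E.Nonsingular 0 0 := by
    rw [WeierstrassCurve.Affine.nonsingular_iff, WeierstrassCurve.Affine.equation_iff]
    simp [E]
  refine ⟨h₀, ?_⟩
  -- the curve equation at x₀
  have heq : y ^ 2 = x₀ ^ 3 + x₀ := by
    have := (WeierstrassCurve.Affine.equation_iff ..).mp h.1
    simp only [E] at this
    linear_combination this
  -- y is nonzero
  have hy0 : y ≠ 0 := by
    intro hy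
    rw [hy] at heq
    have hx1 : (x₀ ^ 2 - 1) ^ 2 = 0 := by linear_combination hq + 4 * heq
    have hx1' : x₀ ^ 2 = 1 := by
      have := pow_eq_zero_iff (n := 2) (by norm_num) |>.mp hx1
      linear_combination this
    have hx0 : x₀ = 0 := by
      have h2x : 2 * x₀ = 0 := by linear_combination -heq - x₀ * hx1'
      exact (mul_eq_zero.mp h2x).resolve_left (by norm_num)
    rw [hx0] at hx1'
    norm_num at hx1'
  have hnegY : ∀ x y' : ℂ, E.negY x y' = -y' := by
    intro x y'
    simp [WeierstrassCurve.Affine.negY, E]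
  -- y ≠ negY
  have hyne : y ≠ E.negY x₀ y := by
    rw [hnegY]
    intro hc
    exact hy0 (add_self_eq_zero.mp (by linear_combination hc))
  -- the slope for doubling P
  set L := E.slope x₀ x₀ y y with hL_def
  clear_value L
  have hL : L = (3 * x₀ ^ 2 + 1) / (2 * y) := by
    rw [hL_def, WeierstrassCurve.Affine.slope_of_Y_ne rfl hyne, hnegY]
    simp only [E]
    ring
  -- the x-coordinate of 2P
  have hx₂ : E.addX x₀ x₀ L = -1 := by
    rw [WeierstrassCurve.Affine.addX, hL]
    simp only [E]
    field_simp
    linear_combination (4 - 8 * x₀) * heq + hq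
  -- nonsingularity of 2P
  have h₂ := WeierstrassCurve.Affine.nonsingular_add h h (fun hxy => hyne hxy.2)
  rw [← hL_def, hx₂] at h₂
  set y₂ := E.addY x₀ x₀ y L with hy₂_def
  clear_value y₂
  -- the curve equation at 2P
  have heq₂ : y₂ ^ 2 = -2 := by
    have := (WeierstrassCurve.Affine.equation_iff ..).mp h₂.1
    simp only [E] at this
    linear_combination this
  have hy₂0 : y₂ ≠ 0 := by
    intro hc
    rw [hc] at heq₂
    norm_num at heq₂
  have hy₂ne : y₂ ≠ E.negY (-1) y₂ := by
    rw [hnegY]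
    intro hc
    exact hy₂0 (add_self_eq_zero.mp (by linear_combination hc))
  -- the slope for doubling 2P
  set L₂ := E.slope (-1) (-1) y₂ y₂ with hL₂_def
  clear_value L₂
  have hL₂ : L₂ = 2 / y₂ := by
    rw [hL₂_def, WeierstrassCurve.Affine.slope_of_Y_ne rfl hy₂ne, hnegY]
    simp only [E]
    rw [div_eq_div_iff (by intro hc; exact hy₂0 (by linear_combination hc/2)) hy₂0]
    ring
  have hx₃ : E.addX (-1) (-1) L₂ = 0 := by
    rw [WeierstrassCurve.Affine.addX, hL₂]
    simp only [E]
    field_simp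
    linear_combination 2 * heq₂
  have hy₃ : E.addY (-1) (-1) y₂ L₂ = 0 := by
    rw [WeierstrassCurve.Affine.addY, WeierstrassCurve.Affine.negAddY, hnegY, hx₃, hL₂]
    field_simp
    linear_combination -heq₂
  -- assemble
  have hdouble : WeierstrassCurve.Affine.Point.some _ _ h + WeierstrassCurve.Affine.Point.some _ _ h
      = WeierstrassCurve.Affine.Point.some _ _ h₂ := by
    rw [WeierstrassCurve.Affine.Point.add_self_of_Y_ne hyne]
    exact some_congr (by rw [← hL_def]; exact hx₂) (by rw [hy₂_def, hL_def]) _ _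
  have hquad : WeierstrassCurve.Affine.Point.some _ _ h₂ + WeierstrassCurve.Affine.Point.some _ _ h₂
      = WeierstrassCurve.Affine.Point.some _ _ h₀ := by
    rw [WeierstrassCurve.Affine.Point.add_self_of_Y_ne hy₂ne]
    exact some_congr (by rw [← hL₂_def]; exact hx₃) (by rw [← hL₂_def]; exact hy₃) _ _
  calc 4 • WeierstrassCurve.Affine.Point.some _ _ h
      = (WeierstrassCurve.Affine.Point.some _ _ h + WeierstrassCurve.Affine.Point.some _ _ h)
        + (WeierstrassCurve.Affine.Point.some _ _ h + WeierstrassCurve.Affine.Point.some _ _ h) := by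
        rw [show (4 : ℕ) = 2 * 2 from rfl, mul_smul, two_smul, two_smul]
    _ = WeierstrassCurve.Affine.Point.some _ _ h₀ := by rw [hdouble, hquad]

theorem stmt_5 (y : ℂ)
    (h : E.Nonsingular ((Real.sqrt 2 : ℂ) - 1 - I * Real.sqrt (2 * (Real.sqrt 2 - 1))) y) :
    ∃ h₀ : E.Nonsingular 0 0,
      4 • WeierstrassCurve.Affine.Point.some _ _ h = WeierstrassCurve.Affine.Point.some _ _ h₀ := by
  apply key
  set r : ℂ := (Real.sqrt 2 : ℂ) with hr_def
  set s : ℂ := (Real.sqrt (2 * (Real.sqrt 2 - 1)) : ℂ) with hs_def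
  have h2 : (1 : ℝ) ≤ Real.sqrt 2 := by
    rw [show (1:ℝ) = Real.sqrt 1 by simp]
    exact Real.sqrt_le_sqrt (by norm_num)
  have hI : I ^ 2 = -1 := Complex.I_sq
  have hr : r ^ 2 = 2 := by
    rw [hr_def, ← Complex.ofReal_pow, Real.sq_sqrt (by norm_num : (0:ℝ) ≤ 2)]
    norm_num
  have hs : s ^ 2 = 2 * (r - 1) := by
    rw [hs_def, hr_def, ← Complex.ofReal_pow,
      Real.sq_sqrt (by nlinarith : (0:ℝ) ≤ 2 * (Real.sqrt 2 - 1))]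
    push_cast
    ring
  clear_value r s
  linear_combination (-8*s^2 + 6*s^2*r^2 - s^4 - 4*I*s^3*r + I^2*s^4) * hI +
    (6 + 2*r - 6*r^2 + s^2 + 4*I*s*r) * hs +
    (10 - 12*r + r^2 + 8*I*s - 4*I*s*r) * hr
end

section
/- Let E be the elliptic curve over ℂ defined by y² = 4x(x²+1) and let P be a point on E with x-coordinate x₀ = √2 - 1 - i·√(2(√2 - 1)). Then none of 2P, 4P equal O, but 8P = O; in particular E(ℂ) contains an element of order 8. -/
open WeierstrassCurve Complex Real

lemma E_a₁ : E.a₁ = 0 := rfl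
lemma E_a₂ : E.a₂ = 0 := rfl
lemma E_a₃ : E.a₃ = 0 := rfl
lemma E_a₄ : E.a₄ = 1 := rfl
lemma E_a₆ : E.a₆ = 0 := rfl

lemma E_equation {x y : ℂ} (h : E.Equation x y) : y ^ 2 = x ^ 3 + x := by
  rw [Affine.equation_iff, E_a₁, E_a₂, E_a₃, E_a₄, E_a₆] at h
  linear_combination h

lemma E_negY (x y : ℂ) : E.negY x y = -y := by
  rw [Affine.negY, E_a₁, E_a₃]; ring

/-- Helper to compute the `x`-coordinate of a doubled point. -/
lemma div_sq_helper {a b c x x' : ℂ} (hb : b ≠ 0) (h : a ^ 2 = c * (2 * b) ^ 2)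
    (h2 : c - 2 * x = x') : (a / (2 * b)) ^ 2 - 2 * x = x' := by
  have h2b : (2 * b) ≠ 0 := mul_ne_zero two_ne_zero hb
  rw [div_pow, h, mul_div_assoc, div_self (pow_ne_zero 2 h2b), mul_one, h2]

/-- Doubling formula: if `y ≠ 0`, then doubling `(x, y)` gives a point with the
expected `x`-coordinate. -/
lemma E_dbl {x y x' : ℂ} (h : E.Nonsingular x y) (hy : y ≠ 0)
    (hx' : ((3 * x ^ 2 + 1) / (2 * y)) ^ 2 - 2 * x = x') :
    ∃ (y' : ℂ) (h' : E.Nonsingular x' y'),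
      Affine.Point.some _ _ h + Affine.Point.some _ _ h = Affine.Point.some _ _ h' := by
  have hneg : y ≠ E.negY x y := by
    rw [E_negY]
    intro hc
    exact hy (by linear_combination hc / 2)
  have hx : E.addX x x (E.slope x x y y) = x' := by
    rw [Affine.slope_of_Y_ne rfl hneg, E_negY, Affine.addX, E_a₁, E_a₂, E_a₄]
    rw [← hx']
    have h2y : y - -y = 2 * y := by ring
    rw [h2y]
    ring
  refine ⟨E.addY x x y (E.slope x x y y), hx ▸ E.nonsingular_add h h fun hc => hneg hc.2, ?_⟩
  rw [Affine.Point.add_self_of_Y_ne hneg]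
  cases hx
  rfl

theorem stmt_17 :
    (∀ (y : ℂ)
        (h : E.Nonsingular ((Real.sqrt 2 : ℂ) - 1 - I * Real.sqrt (2 * (Real.sqrt 2 - 1))) y),
      2 • WeierstrassCurve.Affine.Point.some _ _ h ≠ 0 ∧
      4 • WeierstrassCurve.Affine.Point.some _ _ h ≠ 0 ∧
      8 • WeierstrassCurve.Affine.Point.some _ _ h = 0) ∧
    ∃ Q : E.Point, addOrderOf Q = 8 := by
  -- basic real facts
  have h1s : (1 : ℝ) < Real.sqrt 2 := by
    nlinarith [Real.sq_sqrt (by norm_num : (0:ℝ) ≤ 2), Real.sqrt_nonneg 2]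
  have htpos : (0 : ℝ) < Real.sqrt (2 * (Real.sqrt 2 - 1)) :=
    Real.sqrt_pos.mpr (by nlinarith)
  set sr : ℝ := Real.sqrt 2 with hsr
  set tr : ℝ := Real.sqrt (2 * (Real.sqrt 2 - 1)) with htr
  have hs : (sr : ℂ) ^ 2 = 2 := by
    rw [hsr, ← Complex.ofReal_pow, Real.sq_sqrt (by norm_num : (0:ℝ) ≤ 2)]
    norm_num
  have ht : (tr : ℂ) ^ 2 = 2 * ((sr : ℂ) - 1) := by
    rw [htr, ← Complex.ofReal_pow,
      Real.sq_sqrt (by nlinarith : (0:ℝ) ≤ 2 * (Real.sqrt 2 - 1))]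
    push_cast
    rw [hsr]
  have hI : (I : ℂ) ^ 2 = -1 := Complex.I_sq
  set x₀ : ℂ := (sr : ℂ) - 1 - I * (tr : ℂ) with hx₀
  have hx₀im : x₀.im = -tr := by simp [hx₀]
  have hx₀re : x₀.re = sr - 1 := by simp [hx₀]
  clear_value sr tr x₀
  -- the key quartic identity satisfied by x₀
  have hquartic : x₀ ^ 4 + 4 * x₀ ^ 3 - 2 * x₀ ^ 2 + 4 * x₀ + 1 = 0 := by
    rw [hx₀]
    linear_combination
      ((-8) * (tr:ℂ)^2 - (tr:ℂ)^4 + (tr:ℂ)^4 * I^2 - 4 * (sr:ℂ) * (tr:ℂ)^3 * I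
          + 6 * (sr:ℂ)^2 * (tr:ℂ)^2) * hI +
      (6 + (tr:ℂ)^2 + 2 * (sr:ℂ) + 4 * (sr:ℂ) * (tr:ℂ) * I - 6 * (sr:ℂ)^2) * ht +
      (10 + 8 * (tr:ℂ) * I - 12 * (sr:ℂ) - 4 * (sr:ℂ) * (tr:ℂ) * I + (sr:ℂ)^2) * hs
  -- x₀³ + x₀ ≠ 0
  have hcube : x₀ ^ 3 + x₀ ≠ 0 := by
    intro hc
    have h0 : x₀ = 0 ∨ x₀ ^ 2 + 1 = 0 :=
      mul_eq_zero.mp (show x₀ * (x₀ ^ 2 + 1) = 0 by linear_combination hc)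
    rcases h0 with h0 | h0
    · have := congrArg Complex.im h0
      rw [hx₀im] at this
      simp at this
      nlinarith
    · have h1 : (x₀ ^ 2 + 1).im = 2 * (sr - 1) * (-tr) := by
        rw [pow_two]
        simp [Complex.add_im, Complex.mul_im, hx₀im, hx₀re]
        ring
      have h2 : (2:ℝ) * (sr - 1) * (-tr) = 0 := by rw [← h1, h0]; simp
      nlinarith
  -- main computation for an arbitrary y on the curve above x₀
  have main : ∀ (y : ℂ) (h : E.Nonsingular x₀ y),
      2 • Affine.Point.some _ _ h ≠ 0 ∧
      4 • Affine.Point.some _ _ h ≠ 0 ∧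
      8 • Affine.Point.some _ _ h = 0 := by
    intro y h
    have heq : y ^ 2 = x₀ ^ 3 + x₀ := E_equation h.1
    have hy0 : y ≠ 0 := by
      intro hc
      rw [hc] at heq
      exact hcube (by linear_combination -heq)
    -- 2P has x-coordinate -1
    obtain ⟨y₂, h₂, hP2⟩ := E_dbl h hy0 (x' := -1)
      (div_sq_helper (c := 2 * x₀ - 1) hy0
        (by linear_combination hquartic - 4 * (2 * x₀ - 1) * heq)
        (by ring))
    -- 2P equation: y₂² = -2
    have heq₂ : y₂ ^ 2 = -2 := by
      have := E_equation h₂.1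
      linear_combination this
    have hy₂0 : y₂ ≠ 0 := by
      intro hc; rw [hc] at heq₂; norm_num at heq₂
    -- 4P has x-coordinate 0
    obtain ⟨y₄, h₄, hP4⟩ := E_dbl h₂ hy₂0 (x' := 0)
      (div_sq_helper (c := -2) hy₂0 (by linear_combination 8 * heq₂) (by ring))
    -- 4P equation: y₄ = 0
    have heq₄ : y₄ = 0 := by
      have h4 := E_equation h₄.1
      have : y₄ ^ 2 = 0 := by linear_combination h4
      exact pow_eq_zero_iff (n := 2) (by norm_num) |>.mp this
    -- 8P = 0
    have hP8 : Affine.Point.some _ _ h₄ + Affine.Point.some _ _ h₄ = 0 :=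
      Affine.Point.add_self_of_Y_eq (by rw [E_negY, heq₄, neg_zero])
    have h2smul : 2 • Affine.Point.some _ _ h = Affine.Point.some _ _ h₂ := by
      rw [two_smul, hP2]
    have h4smul : 4 • Affine.Point.some _ _ h = Affine.Point.some _ _ h₄ := by
      have h44 : (4 : ℕ) • Affine.Point.some _ _ h = 2 • (2 • Affine.Point.some _ _ h) := by
        rw [smul_smul]; norm_num
      rw [h44, h2smul, two_smul, hP4]
    have h8smul : 8 • Affine.Point.some _ _ h = 0 := by
      have h88 : (8 : ℕ) • Affine.Point.some _ _ h = 2 • (4 • Affine.Point.some _ _ h) := by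
        rw [smul_smul]; norm_num
      rw [h88, h4smul, two_smul, hP8]
    exact ⟨by rw [h2smul]; exact Affine.Point.some_ne_zero _,
      by rw [h4smul]; exact Affine.Point.some_ne_zero _, h8smul⟩
  refine ⟨main, ?_⟩
  -- existence of a point above x₀
  obtain ⟨y, hy⟩ := IsAlgClosed.exists_pow_nat_eq (k := ℂ) (x₀ ^ 3 + x₀) (n := 2) (by norm_num)
  have hy0 : y ≠ 0 := by
    intro hc; rw [hc] at hy; exact hcube (by linear_combination -hy)
  have h : E.Nonsingular x₀ y := by
    rw [Affine.nonsingular_iff, Affine.equation_iff, E_a₁, E_a₂, E_a₃, E_a₄, E_a₆]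
    refine ⟨by linear_combination hy, Or.inr ?_⟩
    intro hc
    exact hy0 (by linear_combination hc / 2)
  obtain ⟨-, h4, h8⟩ := main y h
  refine ⟨Affine.Point.some _ _ h, ?_⟩
  have h4' : ¬ ((2 : ℕ) ^ 2) • Affine.Point.some _ _ h = 0 := by
    rw [(by norm_num : (2:ℕ) ^ 2 = 4)]; exact h4
  have h8' : ((2 : ℕ) ^ (2 + 1)) • Affine.Point.some _ _ h = 0 := by
    rw [(by norm_num : (2:ℕ) ^ (2 + 1) = 8)]; exact h8
  have := addOrderOf_eq_prime_pow h4' h8'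
  rw [this]
  norm_num
end
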